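/- Fix V > 0 and a Bond number B > 0, set κ := √B, λ*₁ := (4V/π)·[1 − 4I₂(κ)/(κ·I₁(κ))]^{−1}, and define h₁*(r) := (λ*₁/2)(1 − r²) − (λ*₁/(κ·I₁(κ)))·[I₀(κ) − I₀(κr)] for r ∈ [0,1]. Then: h₁*(1) = 0, h₁* is strictly decreasing on (0,1), h₁*(r) > 0 for all r ∈ [0,1), ∫_0^1 h₁*(r)·r dr = V/(2π) (so h₁* ∈ M_V), and the function −h₁* is not convex on [0,1]. -/

import Mathlib

/-- Modified Bessel function of the first kind of (natural) order `n`,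
`I_n(x) = sum_k (x/2)^(2k+n) / (k! * Gamma (k+n+1))`. -/
noncomputable def besselI (n : ℕ) (x : ℝ) : ℝ :=
  ∑' k : ℕ, (x / 2) ^ (2 * k + n) / ((k.factorial : ℝ) * Real.Gamma (k + n + 1))

noncomputable def bT (n : ℕ) (x : ℝ) (k : ℕ) : ℝ :=
  (x / 2) ^ (2 * k + n) / ((k.factorial : ℝ) * ((k + n).factorial : ℝ))

lemma besselI_eq (n : ℕ) (x : ℝ) : besselI n x = ∑' k : ℕ, bT n x k := by
  unfold besselI bT
  refine tsum_congr fun k => ?_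
  have h : (k : ℝ) + n + 1 = ((k + n : ℕ) : ℝ) + 1 := by push_cast; ring
  rw [h, Real.Gamma_nat_eq_factorial]

lemma bT_nonneg (n : ℕ) (k : ℕ) {x : ℝ} (hx : 0 ≤ x) : 0 ≤ bT n x k := by
  unfold bT; positivity

lemma bT_pos (n : ℕ) (k : ℕ) {x : ℝ} (hx : 0 < x) : 0 < bT n x k := by
  unfold bT; positivity

lemma summable_bT (n : ℕ) (x : ℝ) : Summable (bT n x) := by
  refine Summable.of_norm_bounded
    (((Real.summable_pow_div_factorial (x ^ 2 / 4)).mul_left (|x / 2| ^ n))) fun k => ?_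
  have hk : (0:ℝ) < k.factorial := by exact_mod_cast Nat.factorial_pos k
  have hkn : (1:ℝ) ≤ (k + n).factorial := by
    exact_mod_cast Nat.one_le_iff_ne_zero.mpr (Nat.factorial_ne_zero _)
  have h1 : ‖bT n x k‖ = |x / 2| ^ (2 * k + n) / ((k.factorial : ℝ) * (k + n).factorial) := by
    rw [bT, norm_div, norm_pow, Real.norm_eq_abs, Real.norm_of_nonneg (by positivity)]
  rw [h1, pow_add, pow_mul]
  have h2 : |x / 2| ^ 2 = x ^ 2 / 4 := by rw [sq_abs]; ring
  rw [h2]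
  calc (x ^ 2 / 4) ^ k * |x / 2| ^ n / ((k.factorial : ℝ) * (k + n).factorial)
      ≤ (x ^ 2 / 4) ^ k * |x / 2| ^ n / (k.factorial : ℝ) := by
        gcongr
        nlinarith
    _ = |x / 2| ^ n * ((x ^ 2 / 4) ^ k / k.factorial) := by ring

lemma bT0_mul (κ r : ℝ) (k : ℕ) : bT 0 (κ * r) k = bT 0 κ k * r ^ (2 * k) := by
  simp only [bT, Nat.add_zero]
  rw [show κ * r / 2 = κ / 2 * r by ring, mul_pow]
  ring

lemma fact_succ_cast (k : ℕ) : ((k + 1).factorial : ℝ) = ((k : ℝ) + 1) * k.factorial := by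
  rw [Nat.factorial_succ]; push_cast; ring

lemma E1 (x : ℝ) (k : ℕ) :
    ((k : ℝ) + 1) * bT 0 x (k + 1) = x / 2 * bT 1 x k := by
  simp only [bT, Nat.add_zero]
  rw [show 2 * (k + 1) = 2 * k + 1 + 1 by ring, pow_succ, fact_succ_cast]
  have h1 : (k.factorial : ℝ) ≠ 0 := by exact_mod_cast Nat.factorial_ne_zero k
  have h2 : ((k : ℝ) + 1) ≠ 0 := by positivity
  have h3 : ((k + 1).factorial : ℝ) ≠ 0 := by exact_mod_cast Nat.factorial_ne_zero (k+1)
  field_simp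

lemma E2 (x : ℝ) (k : ℕ) :
    ((k : ℝ) + 2) * (((k : ℝ) + 2) - 1) * bT 0 x (k + 2) = (x / 2) ^ 2 * bT 2 x k := by
  simp only [bT, Nat.add_zero]
  rw [show 2 * (k + 2) = 2 * k + 2 + 2 by ring, pow_add]
  have h1 : (k.factorial : ℝ) ≠ 0 := by exact_mod_cast Nat.factorial_ne_zero k
  have e : ((k + 2).factorial : ℝ) = ((k:ℝ)+2) * (((k:ℝ)+1) * k.factorial) := by
    rw [show k + 2 = (k + 1) + 1 from rfl, fact_succ_cast, fact_succ_cast]; push_cast; ring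
  rw [e]
  have h2 : ((k : ℝ) + 1) ≠ 0 := by positivity
  have h3 : ((k : ℝ) + 2) ≠ 0 := by positivity
  field_simp
  ring

lemma summable_k_bT0 (x : ℝ) : Summable (fun k : ℕ => (k : ℝ) * bT 0 x k) := by
  rw [← summable_nat_add_iff 1]
  refine (((summable_bT 1 x).mul_left (x / 2))).congr fun k => ?_
  rw [← E1]; push_cast; ring

lemma tsum_k_bT0 (x : ℝ) : ∑' k : ℕ, (k : ℝ) * bT 0 x k = x / 2 * besselI 1 x := by
  rw [Summable.tsum_eq_zero_add (summable_k_bT0 x)]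
  simp only [Nat.cast_zero, zero_mul, zero_add]
  rw [besselI_eq]
  rw [← tsum_mul_left]
  refine tsum_congr fun k => ?_
  rw [← E1]; push_cast; ring_nf

lemma summable_kk_bT0 (x : ℝ) : Summable (fun k : ℕ => (k : ℝ) * ((k : ℝ) - 1) * bT 0 x k) := by
  rw [← summable_nat_add_iff 2]
  refine (((summable_bT 2 x).mul_left ((x / 2) ^ 2))).congr fun k => ?_
  rw [← E2]; push_cast; ring

lemma tsum_kk_bT0 (x : ℝ) :
    ∑' k : ℕ, (k : ℝ) * ((k : ℝ) - 1) * bT 0 x k = (x / 2) ^ 2 * besselI 2 x := by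
  have hs := summable_kk_bT0 x
  rw [Summable.tsum_eq_zero_add hs]
  simp only [Nat.cast_zero, zero_mul, zero_add]
  have hs1 : Summable (fun k : ℕ => ((k:ℝ)+1) * (((k:ℝ)+1) - 1) * bT 0 x (k+1)) := by
    refine ((summable_nat_add_iff 1).mpr hs).congr fun k => ?_
    push_cast; ring
  rw [Summable.tsum_eq_zero_add (hs1.congr fun k => by push_cast; ring)]
  simp only [Nat.cast_zero, Nat.cast_add, Nat.cast_one]
  norm_num
  rw [besselI_eq, ← tsum_mul_left]
  refine tsum_congr fun k => ?_
  rw [← E2]; push_cast; ring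
lemma summable_bT0_div (x : ℝ) : Summable (fun k : ℕ => bT 0 x k / (2 * ((k : ℝ) + 1))) := by
  refine Summable.of_norm_bounded (summable_bT 0 x).norm fun k => ?_
  rw [norm_div]
  have h : (1 : ℝ) ≤ ‖2 * ((k : ℝ) + 1)‖ := by
    rw [Real.norm_of_nonneg (by positivity)]; nlinarith [Nat.cast_nonneg (α := ℝ) k]
  calc ‖bT 0 x k‖ / ‖2 * ((k:ℝ) + 1)‖ ≤ ‖bT 0 x k‖ / 1 := by gcongr
    _ = ‖bT 0 x k‖ := by rw [div_one]

lemma L3 {x : ℝ} (hx : x ≠ 0) :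
    ∑' k : ℕ, bT 0 x k / (2 * ((k : ℝ) + 1)) = besselI 1 x / x := by
  rw [besselI_eq, ← tsum_div_const]
  refine tsum_congr fun k => ?_
  simp only [bT, Nat.add_zero]
  rw [show 2 * k + 1 = 2 * k + 1 from rfl, pow_succ, fact_succ_cast]
  have h1 : (k.factorial : ℝ) ≠ 0 := by exact_mod_cast Nat.factorial_ne_zero k
  have h2 : ((k : ℝ) + 1) ≠ 0 := by positivity
  field_simp

lemma L4 (x : ℝ) : x * besselI 0 x = 2 * besselI 1 x + x * besselI 2 x := by
  have hs0 := (summable_bT 0 x).mul_left x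
  have hs1 := (summable_bT 1 x).mul_left 2
  have key : ∑' k : ℕ, (x * bT 0 x k - 2 * bT 1 x k) = x * besselI 2 x := by
    have hs : Summable (fun k : ℕ => x * bT 0 x k - 2 * bT 1 x k) := hs0.sub hs1
    rw [Summable.tsum_eq_zero_add hs]
    have h0 : x * bT 0 x 0 - 2 * bT 1 x 0 = 0 := by
      simp [bT, Nat.factorial]; ring
    rw [h0, zero_add, besselI_eq, ← tsum_mul_left]
    refine tsum_congr fun k => ?_
    simp only [bT, Nat.add_zero]
    have h1 : (k.factorial : ℝ) ≠ 0 := by exact_mod_cast Nat.factorial_ne_zero k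
    have h2 : ((k : ℝ) + 1) ≠ 0 := by positivity
    have h3 : ((k : ℝ) + 2) ≠ 0 := by positivity
    have e1 : ((k + 1).factorial : ℝ) = ((k:ℝ)+1) * k.factorial := fact_succ_cast k
    have e2 : ((k + 1 + 1).factorial : ℝ) = ((k:ℝ)+2) * (((k:ℝ)+1) * k.factorial) := by
      rw [fact_succ_cast, fact_succ_cast]; push_cast; ring
    have e3 : ((k + 2).factorial : ℝ) = ((k:ℝ)+2) * (((k:ℝ)+1) * k.factorial) := by
      rw [show k + 2 = k + 1 + 1 from rfl]; exact e2
    rw [show 2 * (k + 1) = 2 * k + 1 + 1 by ring]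
    rw [show 2 * k + 1 + 1 = 2 * k + 2 by ring]
    rw [e1, e2, pow_succ (x/2) (2*k+2)]
    field_simp
    ring
  have lhs : ∑' k : ℕ, (x * bT 0 x k - 2 * bT 1 x k)
      = x * besselI 0 x - 2 * besselI 1 x := by
    rw [Summable.tsum_sub hs0 hs1, tsum_mul_left, tsum_mul_left, ← besselI_eq, ← besselI_eq]
  rw [lhs] at key
  linarith
lemma besselI_pos (n : ℕ) {x : ℝ} (hx : 0 < x) : 0 < besselI n x := by
  rw [besselI_eq]
  exact Summable.tsum_pos (summable_bT n x) (fun k => bT_nonneg n k hx.le) 0 (bT_pos n 0 hx)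

lemma L6 {x : ℝ} (hx : 0 < x) : 4 * besselI 2 x < x * besselI 1 x := by
  rw [besselI_eq, besselI_eq, ← tsum_mul_left, ← tsum_mul_left]
  have hterm : ∀ k : ℕ, 4 * bT 2 x k ≤ x * bT 1 x k := by
    intro k
    simp only [bT]
    have h1 : (k.factorial : ℝ) ≠ 0 := by exact_mod_cast Nat.factorial_ne_zero k
    have e1 : ((k + 1).factorial : ℝ) = ((k:ℝ)+1) * k.factorial := fact_succ_cast k
    have e2 : ((k + 2).factorial : ℝ) = ((k:ℝ)+2) * (((k:ℝ)+1) * k.factorial) := by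
      rw [show k + 2 = k + 1 + 1 from rfl, fact_succ_cast, fact_succ_cast]; push_cast; ring
    have hp : (0:ℝ) < (x/2) ^ (2*k+2) := by positivity
    rw [show 2*k+1 = 2*k+1 from rfl, e1, e2]
    have hx2 : x * (x/2)^(2*k+1) = 2 * (x/2)^(2*k+2) := by
      rw [pow_succ]; ring
    rw [← mul_div_assoc, ← mul_div_assoc, hx2, div_le_div_iff₀ (by positivity) (by positivity)]
    have hkf : (0:ℝ) < k.factorial := by exact_mod_cast Nat.factorial_pos k
    have hk0 : (0:ℝ) ≤ k := Nat.cast_nonneg k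
    nlinarith [mul_nonneg (mul_nonneg hp.le (mul_nonneg hkf.le (mul_nonneg (add_nonneg hk0 zero_le_one) hkf.le))) hk0]
  refine Summable.tsum_lt_tsum hterm ?_ ((summable_bT 2 x).mul_left 4) ((summable_bT 1 x).mul_left x)
    (i := 1)
  simp only [bT]
  have hp : (0:ℝ) < (x/2) ^ 4 := by positivity
  have hx2 : x * (x/2)^(2*1+1) = 2 * (x/2)^4 := by
    rw [show (4:ℕ) = 3 + 1 from rfl, pow_succ]; ring
  norm_num [Nat.factorial]
  nlinarith [hp]
lemma P1 (k : ℕ) {u v : ℝ} (hu : 0 ≤ u) (huv : u ≤ v) (hv : v ≤ 1) :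
    v ^ k - u ^ k ≤ (k : ℝ) * (v - u) := by
  induction k with
  | zero => simp
  | succ k ih =>
    have h1 : 0 ≤ v ^ k - u ^ k := by
      have := pow_le_pow_left₀ hu huv k; linarith
    have h2 : u ^ k ≤ 1 := pow_le_one₀ hu (huv.trans hv)
    have h3 : v ^ (k+1) - u ^ (k+1) = v * (v ^ k - u ^ k) + u ^ k * (v - u) := by ring
    push_cast
    nlinarith [h1, h2, ih]

lemma P2 (k : ℕ) {u : ℝ} (hu : 0 ≤ u) (hu1 : u ≤ 1) :
    (k : ℝ) * (1 - u) - (1 - u ^ k) ≤ (k : ℝ) * ((k : ℝ) - 1) * (1 - u) ^ 2 := by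
  induction k with
  | zero => simp
  | succ k ih =>
    have hp1 := P1 k hu hu1 le_rfl
    have h3 : 1 - u ^ (k+1) = (1 - u ^ k) + u ^ k * (1 - u) := by ring
    have hk0 : (0:ℝ) ≤ k := Nat.cast_nonneg k
    have hp1' : 1 - u ^ k ≤ (k:ℝ) * (1 - u) := by
      have : (1:ℝ) ^ k = 1 := one_pow k
      linarith [hp1, this.symm.le]
    have h4 : (1-u) * (1 - u^k) ≤ (1-u) * ((k:ℝ)*(1-u)) :=
      mul_le_mul_of_nonneg_left hp1' (by linarith)
    push_cast
    nlinarith [ih, h4, mul_nonneg hk0 (sq_nonneg (1-u))]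

lemma keyA {κ r s : ℝ} (hκ : 0 < κ) (hr : 0 ≤ r) (hrs : r < s) (hs : s ≤ 1) :
    besselI 0 (κ * s) - besselI 0 (κ * r) < (s ^ 2 - r ^ 2) * (κ / 2 * besselI 1 κ) := by
  have hs2 : Summable fun k : ℕ => (s ^ 2 - r ^ 2) * ((k : ℝ) * bT 0 κ k) :=
    (summable_k_bT0 κ).mul_left _
  rw [besselI_eq, besselI_eq, ← tsum_k_bT0, ← Summable.tsum_sub (summable_bT 0 (κ*s)) (summable_bT 0 (κ*r)),
    ← tsum_mul_left]
  have hb : ∀ k, 0 ≤ bT 0 κ k := fun k => bT_nonneg 0 k hκ.le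
  have hu : 0 ≤ r ^ 2 := sq_nonneg r
  have huv : r ^ 2 ≤ s ^ 2 := by nlinarith
  have hv : s ^ 2 ≤ 1 := by nlinarith
  refine Summable.tsum_lt_tsum (fun k => ?_) ?_
    ((summable_bT 0 (κ*s)).sub (summable_bT 0 (κ*r))) hs2 (i := 2)
  · rw [bT0_mul, bT0_mul, pow_mul, pow_mul]
    have := P1 k hu huv hv
    nlinarith [hb k, this, P1 k hu huv hv]
  · rw [bT0_mul, bT0_mul, pow_mul, pow_mul]
    have hbp : 0 < bT 0 κ 2 := bT_pos 0 2 hκ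
    have h1 : r ^ 2 < s ^ 2 := by nlinarith
    have h2 : r ^ 2 < 1 := lt_of_lt_of_le h1 hv
    push_cast
    nlinarith [mul_pos hbp (mul_pos (sub_pos.mpr h1) (by nlinarith : (0:ℝ) < 2 - (s^2 + r^2)))]

lemma keyB {κ r : ℝ} (hκ : 0 < κ) (hr : 0 ≤ r) (hr1 : r ≤ 1) :
    (1 - r ^ 2) * (κ / 2 * besselI 1 κ) - (besselI 0 κ - besselI 0 (κ * r)) ≤
      (1 - r ^ 2) ^ 2 * ((κ / 2) ^ 2 * besselI 2 κ) := by
  have hb : ∀ k, 0 ≤ bT 0 κ k := fun k => bT_nonneg 0 k hκ.le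
  have hu : 0 ≤ r ^ 2 := sq_nonneg r
  have hu1 : r ^ 2 ≤ 1 := by nlinarith
  have hsA : Summable fun k : ℕ => (1 - r ^ 2) * ((k : ℝ) * bT 0 κ k) :=
    (summable_k_bT0 κ).mul_left _
  have hsB : Summable fun k : ℕ => bT 0 κ k - bT 0 (κ * r) k :=
    (summable_bT 0 κ).sub (summable_bT 0 (κ*r))
  have hsC : Summable fun k : ℕ => (1 - r ^ 2) ^ 2 * ((k : ℝ) * ((k : ℝ) - 1) * bT 0 κ k) :=
    (summable_kk_bT0 κ).mul_left _
  rw [← tsum_k_bT0, ← tsum_kk_bT0, besselI_eq 0 κ, besselI_eq 0 (κ*r), ← tsum_mul_left,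
    ← Summable.tsum_sub (summable_bT 0 κ) (summable_bT 0 (κ*r)), ← tsum_mul_left,
    ← Summable.tsum_sub hsA hsB]
  refine Summable.tsum_le_tsum (fun k => ?_) (hsA.sub hsB) hsC
  rw [bT0_mul, pow_mul]
  have := P2 k hu hu1
  nlinarith [hb k, this]
lemma besselI0_contOn (κ : ℝ) : ContinuousOn (fun r : ℝ => besselI 0 (κ * r)) (Set.Icc 0 1) := by
  rw [continuousOn_iff_continuous_restrict]
  have he : (Set.Icc (0:ℝ) 1).restrict (fun r : ℝ => besselI 0 (κ * r)) =
      fun x : Set.Icc (0:ℝ) 1 => ∑' k : ℕ, bT 0 κ k * (x : ℝ) ^ (2 * k) := by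
    funext x
    show besselI 0 (κ * x) = _
    rw [besselI_eq]
    exact tsum_congr fun k => bT0_mul κ x k
  rw [show (Set.Icc (0:ℝ) 1).domRestrict (fun r : ℝ => besselI 0 (κ * r)) = _ from he]
  refine continuous_tsum (fun k => ?_) (summable_bT 0 κ).abs (fun k x => ?_)
  · exact continuous_const.mul (continuous_subtype_val.pow _)
  · have hx0 : (0:ℝ) ≤ (x : ℝ) := x.2.1
    have hx1 : (x : ℝ) ≤ 1 := x.2.2
    rw [norm_mul, Real.norm_of_nonneg (pow_nonneg hx0 _)]
    calc ‖bT 0 κ k‖ * (x:ℝ) ^ (2*k) ≤ ‖bT 0 κ k‖ * 1 :=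
          mul_le_mul_of_nonneg_left (pow_le_one₀ hx0 hx1) (norm_nonneg _)
      _ = |bT 0 κ k| := by rw [mul_one, Real.norm_eq_abs]

lemma pow_setIntegral (m : ℕ) : ∫ r in Set.Ioc (0:ℝ) 1, r ^ m = 1 / (m + 1) := by
  rw [← intervalIntegral.integral_of_le zero_le_one, integral_pow]
  norm_num

lemma besselI0_integral {κ : ℝ} (hκ : 0 < κ) :
    ∫ r in (0:ℝ)..1, besselI 0 (κ * r) * r = besselI 1 κ / κ := by
  rw [intervalIntegral.integral_of_le zero_le_one]
  have hpt : ∀ r : ℝ, besselI 0 (κ * r) * r = ∑' k : ℕ, bT 0 κ k * r ^ (2 * k + 1) := by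
    intro r
    rw [besselI_eq, ← tsum_mul_right]
    exact tsum_congr fun k => by rw [bT0_mul, pow_succ]; ring
  have hFc : ∀ k : ℕ, Continuous (fun r : ℝ => bT 0 κ k * r ^ (2 * k + 1)) :=
    fun k => continuous_const.mul (continuous_pow _)
  have hFi : ∀ k : ℕ, MeasureTheory.Integrable (fun r : ℝ => bT 0 κ k * r ^ (2 * k + 1))
      (MeasureTheory.volume.restrict (Set.Ioc 0 1)) := fun k => (hFc k).integrableOn_Ioc
  have hnorm : ∀ k : ℕ, (∫ r in Set.Ioc (0:ℝ) 1, ‖bT 0 κ k * r ^ (2 * k + 1)‖)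
      = bT 0 κ k * (1 / (2 * (k:ℝ) + 2)) := by
    intro k
    have : ∀ r ∈ Set.Ioc (0:ℝ) 1, ‖bT 0 κ k * r ^ (2 * k + 1)‖
        = bT 0 κ k * r ^ (2 * k + 1) := by
      intro r hr
      rw [Real.norm_of_nonneg (mul_nonneg (bT_nonneg 0 k hκ.le) (pow_nonneg hr.1.le _))]
    rw [MeasureTheory.setIntegral_congr_fun measurableSet_Ioc this,
      MeasureTheory.integral_const_mul, pow_setIntegral]
    push_cast
    ring_nf
  have hsum : Summable (fun k : ℕ => ∫ r in Set.Ioc (0:ℝ) 1, ‖bT 0 κ k * r ^ (2 * k + 1)‖) := by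
    refine Summable.of_norm_bounded (summable_bT 0 κ).norm fun k => ?_
    show ‖∫ r in Set.Ioc (0:ℝ) 1, ‖bT 0 κ k * r ^ (2 * k + 1)‖‖ ≤ ‖bT 0 κ k‖
    rw [hnorm k, Real.norm_of_nonneg (mul_nonneg (bT_nonneg 0 k hκ.le) (by positivity)),
      Real.norm_of_nonneg (bT_nonneg 0 k hκ.le)]
    calc bT 0 κ k * (1 / (2 * (k:ℝ) + 2)) ≤ bT 0 κ k * 1 := by
          refine mul_le_mul_of_nonneg_left ?_ (bT_nonneg 0 k hκ.le)
          rw [div_le_one (by positivity)]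
          nlinarith [Nat.cast_nonneg (α := ℝ) k]
      _ = bT 0 κ k := mul_one _
  have := MeasureTheory.integral_tsum_of_summable_integral_norm hFi hsum
  simp only [hpt]
  rw [← this]
  have : ∀ k : ℕ, (∫ r in Set.Ioc (0:ℝ) 1, bT 0 κ k * r ^ (2 * k + 1))
      = bT 0 κ k / (2 * ((k:ℝ) + 1)) := by
    intro k
    rw [MeasureTheory.integral_const_mul, pow_setIntegral]
    push_cast; ring
  rw [tsum_congr this, L3 hκ.ne']

set_option maxHeartbeats 1000000 in
theorem optimal_shape_radial_m_one (V B : ℝ) (hV : 0 < V) (hB : 0 < B)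
    (κ : ℝ) (hκ : κ = Real.sqrt B)
    (lam1 : ℝ)
    (hlam : lam1 = (4 * V / Real.pi) * (1 - 4 * besselI 2 κ / (κ * besselI 1 κ))⁻¹)
    (h1 : ℝ → ℝ)
    (hh1 : ∀ r : ℝ, h1 r = lam1 / 2 * (1 - r ^ 2) -
      lam1 / (κ * besselI 1 κ) * (besselI 0 κ - besselI 0 (κ * r))) :
    h1 1 = 0 ∧
    StrictAntiOn h1 (Set.Ioo 0 1) ∧
    (∀ r ∈ Set.Ico (0 : ℝ) 1, 0 < h1 r) ∧
    (∫ r in (0 : ℝ)..1, h1 r * r) = V / (2 * Real.pi) ∧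
    ¬ ConvexOn ℝ (Set.Icc (0 : ℝ) 1) (fun r => -h1 r) := by
  have hπ := Real.pi_pos
  have hκpos : 0 < κ := hκ ▸ Real.sqrt_pos.mpr hB
  have hI1 : 0 < besselI 1 κ := besselI_pos 1 hκpos
  have hI2 : 0 < besselI 2 κ := besselI_pos 2 hκpos
  have hL6 : 4 * besselI 2 κ < κ * besselI 1 κ := L6 hκpos
  have hden : 0 < κ * besselI 1 κ := mul_pos hκpos hI1
  have ht : 0 < 1 - 4 * besselI 2 κ / (κ * besselI 1 κ) := by
    rw [sub_pos, div_lt_one hden]; linarith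
  have hlam1 : 0 < lam1 := by
    rw [hlam]; exact mul_pos (by positivity) (inv_pos.mpr ht)
  set c : ℝ := lam1 / (κ * besselI 1 κ) with hc
  have hcpos : 0 < c := div_pos hlam1 hden
  have hch : c * (κ * besselI 1 κ) = lam1 := div_mul_cancel₀ _ hden.ne'
  clear_value c
  -- Part 1
  have part1 : h1 1 = 0 := by
    rw [hh1 1, mul_one]; norm_num
  -- key monotonicity claim
  have key : ∀ r s : ℝ, 0 ≤ r → r < s → s ≤ 1 → h1 s < h1 r := by
    intro r s hr hrs hs1
    rw [hh1 r, hh1 s]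
    have hA := keyA hκpos hr hrs hs1
    have hA' : c * (besselI 0 (κ*s) - besselI 0 (κ*r))
        < c * ((s^2-r^2) * (κ/2 * besselI 1 κ)) := mul_lt_mul_of_pos_left hA hcpos
    have he : c * ((s^2-r^2) * (κ/2 * besselI 1 κ)) = lam1/2*(s^2-r^2) := by
      linear_combination ((s^2 - r^2)/2) * hch
    nlinarith [hA', he]
  have part2 : StrictAntiOn h1 (Set.Ioo 0 1) :=
    fun r hr s hs hrs => key r s hr.1.le hrs hs.2.le
  have part3 : ∀ r ∈ Set.Ico (0 : ℝ) 1, 0 < h1 r := by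
    intro r hr
    have := key r 1 hr.1 hr.2 le_rfl
    linarith [part1 ▸ this]
  -- Part 4 : integral
  have part4 : (∫ r in (0 : ℝ)..1, h1 r * r) = V / (2 * Real.pi) := by
    have hint_eq : ∀ r : ℝ, h1 r * r =
        lam1 / 2 * (r - r ^ 3) - c * besselI 0 κ * r + c * (besselI 0 (κ * r) * r) := by
      intro r; rw [hh1 r]; ring
    have hcont : ContinuousOn (fun r : ℝ => besselI 0 (κ * r) * r) (Set.Icc 0 1) :=
      (besselI0_contOn κ).mul continuousOn_id
    have hii : IntervalIntegrable (fun r : ℝ => besselI 0 (κ * r) * r)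
        MeasureTheory.volume 0 1 := by
      apply ContinuousOn.intervalIntegrable
      rwa [Set.uIcc_of_le zero_le_one]
    have hii2 : IntervalIntegrable (fun r : ℝ => c * (besselI 0 (κ * r) * r))
        MeasureTheory.volume 0 1 := hii.const_mul c
    have hpolyc : Continuous (fun r : ℝ => lam1 / 2 * (r - r ^ 3) - c * besselI 0 κ * r) :=
      (continuous_const.mul (continuous_id.sub (continuous_pow 3))).sub
        (continuous_const.mul continuous_id)
    have hiA : IntervalIntegrable (fun r : ℝ => lam1 / 2 * (r - r ^ 3) - c * besselI 0 κ * r)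
        MeasureTheory.volume 0 1 := hpolyc.intervalIntegrable 0 1
    calc (∫ r in (0 : ℝ)..1, h1 r * r)
        = ∫ r in (0 : ℝ)..1,
            (lam1 / 2 * (r - r ^ 3) - c * besselI 0 κ * r + c * (besselI 0 (κ * r) * r)) := by
          refine intervalIntegral.integral_congr fun r _ => hint_eq r
      _ = (∫ r in (0 : ℝ)..1, (lam1 / 2 * (r - r ^ 3) - c * besselI 0 κ * r))
            + ∫ r in (0 : ℝ)..1, c * (besselI 0 (κ * r) * r) :=
          intervalIntegral.integral_add hiA hii2
      _ = (lam1 / 8 - c * besselI 0 κ / 2) + c * (besselI 1 κ / κ) := by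
          rw [intervalIntegral.integral_const_mul, besselI0_integral hκpos]
          congr 1
          have e1 : (∫ r in (0:ℝ)..1, (lam1 / 2 * (r - r ^ 3) - c * besselI 0 κ * r))
              = lam1/2 * (∫ r in (0:ℝ)..1, (r - r^3)) - c * besselI 0 κ * ∫ r in (0:ℝ)..1, r := by
            rw [← intervalIntegral.integral_const_mul, ← intervalIntegral.integral_const_mul,
              ← intervalIntegral.integral_sub]
            · exact Continuous.intervalIntegrable
                (continuous_const.mul (continuous_id.sub (continuous_pow 3))) 0 1
            · exact Continuous.intervalIntegrable (continuous_const.mul continuous_id) 0 1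
          rw [e1]
          have e2 : (∫ r in (0:ℝ)..1, (r - r^3)) = 1/4 := by
            have i1 : IntervalIntegrable (fun r : ℝ => r) MeasureTheory.volume 0 1 :=
              continuous_id.intervalIntegrable 0 1
            have i3 : IntervalIntegrable (fun r : ℝ => r ^ 3) MeasureTheory.volume 0 1 :=
              (continuous_pow 3).intervalIntegrable 0 1
            rw [intervalIntegral.integral_sub i1 i3, integral_id, integral_pow]
            norm_num
          have e3 : (∫ r in (0:ℝ)..1, r) = 1/2 := by rw [integral_id]; norm_num
          rw [e2, e3]; ring
      _ = V / (2 * Real.pi) := by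
          have hrec := L4 κ
          have e4 : c * besselI 0 κ / 2 = c * (besselI 1 κ / κ) + c * besselI 2 κ / 2 := by
            field_simp
            linear_combination hrec
          rw [e4]
          have e5 : c * besselI 2 κ / 2 = lam1 * (4 * besselI 2 κ / (κ * besselI 1 κ)) / 8 := by
            rw [hc]; ring
          rw [e5]
          have e6 : lam1 * (1 - 4 * besselI 2 κ / (κ * besselI 1 κ)) = 4 * V / Real.pi := by
            rw [hlam, mul_assoc, inv_mul_cancel₀ ht.ne', mul_one]
          have : lam1 / 8 - lam1 * (4 * besselI 2 κ / (κ * besselI 1 κ)) / 8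
              = (4 * V / Real.pi) / 8 := by
            rw [← e6]; ring
          rw [show lam1 / 8 - (c * (besselI 1 κ / κ) +
              lam1 * (4 * besselI 2 κ / (κ * besselI 1 κ)) / 8) + c * (besselI 1 κ / κ)
              = lam1 / 8 - lam1 * (4 * besselI 2 κ / (κ * besselI 1 κ)) / 8 by ring, this]
          field_simp
          ring
  -- Part 5 : nonconvexity
  have part5 : ¬ ConvexOn ℝ (Set.Icc (0 : ℝ) 1) (fun r => -h1 r) := by
    intro hcv
    have hpos0 : 0 < h1 0 := part3 0 (by norm_num)
    set D : ℝ := c * ((κ/2)^2 * besselI 2 κ) with hD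
    have hDpos : 0 < D := by
      rw [hD]; exact mul_pos hcpos (by positivity)
    have hbound : ∀ r : ℝ, 0 ≤ r → r ≤ 1 → h1 r ≤ (1 - r^2)^2 * D := by
      intro r h0 h1r
      have hKB := keyB hκpos h0 h1r
      calc h1 r = c * ((1-r^2) * (κ/2 * besselI 1 κ) - (besselI 0 κ - besselI 0 (κ*r))) := by
            rw [hh1 r]; linear_combination (-(1 - r^2)/2) * hch
        _ ≤ c * ((1-r^2)^2 * ((κ/2)^2 * besselI 2 κ)) := mul_le_mul_of_nonneg_left hKB hcpos.le
        _ = (1-r^2)^2 * D := by rw [hD]; ring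
    set ε : ℝ := min (1/2 : ℝ) (h1 0 / (8 * D)) with hε
    have hεpos : 0 < ε := lt_min (by norm_num) (by positivity)
    have hεle : ε ≤ 1/2 := min_le_left _ _
    have hε8 : ε ≤ h1 0 / (8*D) := min_le_right _ _
    have h8 : ε * (8 * D) ≤ h1 0 := by
      rw [← le_div_iff₀ (by positivity)]; exact hε8
    have hcvx := hcv.2 (Set.mem_Icc.mpr ⟨le_refl 0, zero_le_one⟩)
      (Set.mem_Icc.mpr ⟨zero_le_one, le_refl 1⟩) hεpos.le (by linarith : (0:ℝ) ≤ 1 - ε)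
      (by ring : ε + (1 - ε) = 1)
    simp only [smul_eq_mul, mul_zero, mul_one, zero_add, part1, neg_zero] at hcvx
    -- hcvx : -h1 (1 - ε) ≤ ε * (-h1 0) + (1-ε) * 0
    have hineq : ε * h1 0 ≤ h1 (1 - ε) := by nlinarith [hcvx]
    have hb := hbound (1 - ε) (by linarith) (by linarith)
    have h2e : (2 - ε)^2 ≤ 4 := by nlinarith [hεpos, hεle]
    have hsq : (1 - (1-ε)^2)^2 ≤ 4 * ε^2 := by
      have e : (1 - (1-ε)^2)^2 = ε^2 * (2-ε)^2 := by ring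
      rw [e]
      nlinarith [mul_le_mul_of_nonneg_left h2e (sq_nonneg ε)]
    have hbb : h1 (1 - ε) ≤ 4 * ε^2 * D := by
      calc h1 (1-ε) ≤ (1 - (1-ε)^2)^2 * D := hb
        _ ≤ 4 * ε^2 * D := mul_le_mul_of_nonneg_right hsq hDpos.le
    linarith [mul_le_mul_of_nonneg_left h8 hεpos.le, hineq, hbb,
      mul_pos (mul_pos hεpos hεpos) hDpos]
  exact ⟨part1, part2, part3, part4, part5⟩
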